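/- For each l ≥ 1 there are constants c₃, c₄ > 0 such that for all x, y ∈ ℝ^d and all λ ≥ 0, θ^{(l)}(x,λ) ≤ c₃ · θ^{(l)}(y,λ) · exp[c₄ · log(1+|x-y|²) · α_l(1+|x-y|²)]. -/

import Mathlib

/-- The iterated-logarithm hierarchy: `iterLog α 0 = α`,
`iterLog α (l+1) = log (e + iterLog α l)`. -/
noncomputable def iterLog (α : ℝ → ℝ) : ℕ → ℝ → ℝ
  | 0 => α
  | l + 1 => fun x => Real.log (Real.exp 1 + iterLog α l x)

/-- The modified `θ`-function
`θ^{(l)}(x,λ) = exp[-(λ/α_l(λ)^{1/2})·(1+λ²+log(1+|x|²)·α_l(√(1+|x|²)))^{1/2}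
                 - log(1+|x|²)·α_l(√(1+|x|²))]`. -/
noncomputable def theta (α : ℝ → ℝ) (l : ℕ) {d : ℕ}
    (x : EuclideanSpace ℝ (Fin d)) (lam : ℝ) : ℝ :=
  Real.exp (-(lam / Real.sqrt (iterLog α l lam)) *
      Real.sqrt (1 + lam ^ 2 +
        Real.log (1 + ‖x‖ ^ 2) * iterLog α l (Real.sqrt (1 + ‖x‖ ^ 2))) -
    Real.log (1 + ‖x‖ ^ 2) * iterLog α l (Real.sqrt (1 + ‖x‖ ^ 2)))

/-- Basic package for the iterates: lower bound 1, monotonicity, and the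
tangent-line estimate with slope bound `g u / (1+u)`. -/
lemma iterLog_pkg (α : ℝ → ℝ)
    (hd1 : Differentiable ℝ α)
    (hmono : MonotoneOn α (Set.Ici 0))
    (hconc : ConcaveOn ℝ (Set.Ici 0) α)
    (h0 : 1 ≤ α 0)
    (hder : ∀ x : ℝ, 0 ≤ x → deriv α x ≤ α x / (1 + x)) :
    ∀ k : ℕ, (∀ t : ℝ, 0 ≤ t → 1 ≤ iterLog α k t) ∧
      (∀ u v : ℝ, 0 ≤ u → u ≤ v → iterLog α k u ≤ iterLog α k v) ∧
      (∀ u v : ℝ, 0 ≤ u → u ≤ v →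
        iterLog α k v ≤ iterLog α k u + iterLog α k u * (v - u) / (1 + u)) := by
  intro k
  induction k with
  | zero =>
    refine ⟨?_, ?_, ?_⟩
    · intro t ht
      exact h0.trans (hmono Set.self_mem_Ici ht ht)
    · intro u v hu huv
      exact hmono hu (le_trans hu huv) huv
    · intro u v hu huv
      rcases eq_or_lt_of_le huv with rfl | hlt
      · simp
      · have h1u : (0:ℝ) < 1 + u := by linarith
        have hv : (0:ℝ) ≤ v := le_trans hu huv
        have hslope := (hconc.neg).deriv_le_slope (Set.mem_Ici.2 hu) (Set.mem_Ici.2 hv)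
          hlt (hd1.neg.differentiableAt)
        rw [slope_def_field] at hslope
        have hdn : deriv (-α) u = -deriv α u := by
          rw [show (-α) = fun y => -α y from rfl]; exact deriv.neg
        rw [hdn] at hslope
        -- hslope : -deriv α u ≤ ((-α) v - (-α) u) / (v - u)
        have hsl : (α v - α u) / (v - u) ≤ deriv α u := by
          have : ((-α) v - (-α) u) / (v - u) = -((α v - α u) / (v - u)) := by
            simp [neg_div]; ring_nf
          rw [this] at hslope
          linarith
        have hvu : (0:ℝ) < v - u := by linarith
        have h1 : α v - α u ≤ deriv α u * (v - u) := by
          rw [div_le_iff₀ hvu] at hsl; linarith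
        have h2 : deriv α u * (v - u) ≤ (α u / (1 + u)) * (v - u) :=
          mul_le_mul_of_nonneg_right (hder u hu) (le_of_lt hvu)
        have h3 : (α u / (1 + u)) * (v - u) = α u * (v - u) / (1 + u) := by ring
        simp only [iterLog]
        linarith
  | succ k ih =>
    obtain ⟨hb1, hb2, hb3⟩ := ih
    have hE : ∀ t : ℝ, 0 ≤ t → (0:ℝ) < Real.exp 1 + iterLog α k t := by
      intro t ht
      have := hb1 t ht
      have := Real.exp_pos 1
      linarith
    refine ⟨?_, ?_, ?_⟩
    · intro t ht
      show 1 ≤ Real.log (Real.exp 1 + iterLog α k t)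
      rw [Real.le_log_iff_exp_le (hE t ht)]
      have := hb1 t ht
      linarith
    · intro u v hu huv
      show Real.log (Real.exp 1 + iterLog α k u) ≤ Real.log (Real.exp 1 + iterLog α k v)
      exact Real.log_le_log (hE u hu) (by linarith [hb2 u v hu huv])
    · intro u v hu huv
      have hv : (0:ℝ) ≤ v := le_trans hu huv
      have h1u : (0:ℝ) < 1 + u := by linarith
      have hEu := hE u hu
      have hEv := hE v hv
      have hbuv := hb2 u v hu huv
      have hb3' := hb3 u v hu huv
      show Real.log (Real.exp 1 + iterLog α k v) ≤
        Real.log (Real.exp 1 + iterLog α k u) +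
          Real.log (Real.exp 1 + iterLog α k u) * (v - u) / (1 + u)
      have hlog : Real.log (Real.exp 1 + iterLog α k v) ≤
          Real.log (Real.exp 1 + iterLog α k u) +
            (iterLog α k v - iterLog α k u) / (Real.exp 1 + iterLog α k u) := by
        have hd := Real.log_le_sub_one_of_pos (div_pos hEv hEu)
        rw [Real.log_div (ne_of_gt hEv) (ne_of_gt hEu)] at hd
        have heq : (Real.exp 1 + iterLog α k v) / (Real.exp 1 + iterLog α k u) - 1 =
            (iterLog α k v - iterLog α k u) / (Real.exp 1 + iterLog α k u) := by
          field_simp; ring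
        linarith
      have hnum : (iterLog α k v - iterLog α k u) * (1 + u) ≤
          (v - u) * (Real.exp 1 + iterLog α k u) := by
        have h1 : iterLog α k v - iterLog α k u ≤ iterLog α k u * (v - u) / (1 + u) := by
          linarith
        have h2 : (iterLog α k v - iterLog α k u) * (1 + u) ≤ iterLog α k u * (v - u) := by
          rw [← le_div_iff₀ h1u]; exact h1
        have h3 : iterLog α k u * (v - u) ≤ (Real.exp 1 + iterLog α k u) * (v - u) := by
          have he := Real.exp_pos 1
          have hvu : (0:ℝ) ≤ v - u := by linarith
          exact mul_le_mul_of_nonneg_right (by linarith) hvu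
        linarith
      have hdiv : (iterLog α k v - iterLog α k u) / (Real.exp 1 + iterLog α k u) ≤
          (v - u) / (1 + u) := by
        rw [div_le_div_iff₀ hEu h1u]; exact hnum
      have hg1u : 1 ≤ Real.log (Real.exp 1 + iterLog α k u) := by
        rw [Real.le_log_iff_exp_le hEu]; linarith [hb1 u hu]
      have hvu : (0:ℝ) ≤ v - u := by linarith
      have : (v - u) / (1 + u) ≤
          Real.log (Real.exp 1 + iterLog α k u) * (v - u) / (1 + u) := by
        rw [div_le_div_iff₀ h1u h1u]
        linarith [mul_nonneg (mul_nonneg (by linarith :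
          (0:ℝ) ≤ Real.log (Real.exp 1 + iterLog α k u) - 1) hvu) (le_of_lt h1u)]
      linarith

/-- The core real-variable estimate:
`2 log Y · g Y ≤ 2 log X · g X + C (2 log S · g (S²) + 1)` whenever `Y ≤ X + S`. -/
lemma core_est (g : ℝ → ℝ)
    (hg1 : ∀ t : ℝ, 0 ≤ t → 1 ≤ g t)
    (hg2 : ∀ u v : ℝ, 0 ≤ u → u ≤ v → g u ≤ g v)
    (hg3 : ∀ u v : ℝ, 0 ≤ u → u ≤ v → g v ≤ g u + (v - u) / (1 + u))
    (hg4 : ∀ t : ℝ, 0 ≤ t → g t ≤ g 0 + Real.log (1 + t)) :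
    ∀ S X Y : ℝ, 1 ≤ S → 1 ≤ X → 1 ≤ Y → Y ≤ X + S →
      2 * Real.log Y * g Y ≤ 2 * Real.log X * g X +
        (8 * g 0 + 16) * (2 * Real.log S * g (S ^ 2) + 1) := by
  intro S X Y hS hX hY hYXS
  have hS0 : (0:ℝ) < S := by linarith
  have hX0 : (0:ℝ) < X := by linarith
  have hY0 : (0:ℝ) < Y := by linarith
  have hK : 1 ≤ g 0 := hg1 0 le_rfl
  have hlS : 0 ≤ Real.log S := Real.log_nonneg hS
  have hlX : 0 ≤ Real.log X := Real.log_nonneg hX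
  have hlY : 0 ≤ Real.log Y := Real.log_nonneg hY
  have hS2 : (0:ℝ) ≤ S ^ 2 := sq_nonneg S
  have hgS2 : 1 ≤ g (S ^ 2) := hg1 _ hS2
  have hgX1 : 1 ≤ g X := hg1 X (by linarith)
  have hgY1 : 1 ≤ g Y := hg1 Y (by linarith)
  have hprod : Real.log S ≤ Real.log S * g (S ^ 2) :=
    le_mul_of_one_le_right hlS hgS2
  have hBp : 0 ≤ Real.log S * g (S ^ 2) := mul_nonneg hlS (by linarith)
  have hXgX : 0 ≤ Real.log X * g X := mul_nonneg hlX (by linarith)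
  have hKB : 0 ≤ g 0 * (Real.log S * g (S ^ 2)) := mul_nonneg (by linarith) hBp
  have hlog2 : Real.log 2 ≤ 1 := by
    have := Real.log_le_sub_one_of_pos (by norm_num : (0:ℝ) < 2)
    linarith
  have hgS2u : g (S ^ 2) ≤ g 0 + 1 + 2 * Real.log S := by
    have h1 := hg4 (S ^ 2) hS2
    have h2 : Real.log (1 + S ^ 2) ≤ Real.log (2 * S ^ 2) := by
      apply Real.log_le_log (by linarith)
      nlinarith
    have h3 : Real.log (2 * S ^ 2) = Real.log 2 + Real.log (S ^ 2) := by
      rw [Real.log_mul (by norm_num) (by positivity)]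
    have h4 : Real.log (S ^ 2) = 2 * Real.log S := by
      rw [sq, Real.log_mul (ne_of_gt hS0) (ne_of_gt hS0)]; ring
    linarith
  by_cases hcase : X ≤ S
  · -- Case 1 : X ≤ S, hence Y ≤ 2S
    have hY2S : Y ≤ 2 * S := by linarith
    have hlY2 : Real.log Y ≤ 1 + Real.log S := by
      have h1 := Real.log_le_log hY0 hY2S
      rw [Real.log_mul (by norm_num) (ne_of_gt hS0)] at h1
      linarith
    have hgY2 : g Y ≤ 2 * g (S ^ 2) := by
      have h1 : g Y ≤ g (2 * S) := hg2 Y (2 * S) (by linarith) hY2S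
      have h2 : g (2 * S) ≤ g S + 1 := by
        have h3 := hg3 S (2 * S) (by linarith) (by linarith)
        have h4 : (2 * S - S) / (1 + S) ≤ 1 := by
          rw [div_le_one (by linarith)]; linarith
        linarith
      have h5 : g S ≤ g (S ^ 2) := hg2 S (S ^ 2) (by linarith) (by nlinarith)
      linarith
    have m1 : Real.log Y * g Y ≤ (1 + Real.log S) * (2 * g (S ^ 2)) :=
      mul_le_mul hlY2 hgY2 (by linarith) (by linarith)
    linarith [m1, hgS2u, hprod, hXgX, hBp, hKB, hK]
  · -- Case 2 : S ≤ X
    have hSX : S ≤ X := le_of_not_ge hcase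
    by_cases hYX : Y ≤ X
    · have h1 : Real.log Y ≤ Real.log X := Real.log_le_log hY0 hYX
      have h2 : g Y ≤ g X := hg2 Y X (by linarith) hYX
      have m : Real.log Y * g Y ≤ Real.log X * g X :=
        mul_le_mul h1 h2 (by linarith) hlX
      linarith [m, hBp, hKB, hK, hprod]
    · have hXY : X < Y := lt_of_not_ge hYX
      set r : ℝ := S / X with hrdef
      have hr0 : 0 ≤ r := div_nonneg (by linarith) (by linarith)
      have hr1 : r ≤ 1 := by
        rw [hrdef, div_le_one hX0]; exact hSX
      have hlYX : Real.log Y ≤ Real.log X + r := by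
        have h1 := Real.log_le_sub_one_of_pos (div_pos hY0 hX0)
        rw [Real.log_div (ne_of_gt hY0) (ne_of_gt hX0)] at h1
        have h2 : Y / X ≤ 1 + r := by
          rw [hrdef, div_le_iff₀ hX0]
          have he : (1 + S / X) * X = X + S := by field_simp
          rw [he]; exact hYXS
        linarith
      have hgYX : g Y ≤ g X + r := by
        have h1 := hg3 X Y (by linarith) (le_of_lt hXY)
        have h2 : (Y - X) / (1 + X) ≤ r := by
          rw [hrdef]
          exact div_le_div₀ (by linarith) (by linarith) hX0 (by linarith)
        linarith
      have hgXu : g X ≤ g 0 + 1 + Real.log X := by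
        have h1 := hg4 X (by linarith)
        have h2 : Real.log (1 + X) ≤ Real.log (2 * X) := by
          apply Real.log_le_log (by linarith); linarith
        have h3 : Real.log (2 * X) = Real.log 2 + Real.log X := by
          rw [Real.log_mul (by norm_num) (ne_of_gt hX0)]
        linarith
      -- the key elementary inequality : r * log X ≤ log S + 1
      have hrlX : r * Real.log X ≤ Real.log S + 1 := by
        have ht : (1:ℝ) ≤ X / S := (one_le_div hS0).mpr hSX
        have hlogt : Real.log (X / S) ≤ X / S := by
          have := Real.log_le_sub_one_of_pos (by linarith : (0:ℝ) < X / S)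
          linarith
        have hXS : Real.log X = Real.log S + Real.log (X / S) := by
          rw [Real.log_div (ne_of_gt hX0) (ne_of_gt hS0)]; ring
        have hmul : S * Real.log (X / S) ≤ S * (X / S) :=
          mul_le_mul_of_nonneg_left hlogt (by linarith)
        have hcanc : S * (X / S) = X := by field_simp
        have hSlX : S * Real.log X ≤ (Real.log S + 1) * X := by
          have hmm : S * Real.log S ≤ X * Real.log S :=
            mul_le_mul_of_nonneg_right hSX hlS
          have e1 : S * Real.log X = S * Real.log S + S * Real.log (X / S) := by
            rw [hXS]; ring
          linarith [hmul, hcanc, e1, hmm]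
        have : r * Real.log X = S * Real.log X / X := by
          rw [hrdef]; ring
        rw [this, div_le_iff₀ hX0]
        linarith [hSlX]
      have m1 : Real.log Y * g Y ≤ (Real.log X + r) * (g X + r) :=
        mul_le_mul hlYX hgYX (by linarith) (by linarith)
      have m2 : r * g X ≤ r * (g 0 + 1 + Real.log X) :=
        mul_le_mul_of_nonneg_left hgXu hr0
      have m3 : r * g 0 ≤ g 0 := by nlinarith
      have m4 : r * r ≤ 1 := mul_le_one₀ hr1 hr0 hr1
      linarith [m1, m2, m3, m4, hrlX, hr1, hr0, hBp, hKB, hK, hprod, hXgX]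

set_option maxHeartbeats 1000000 in
theorem stmt_6 (d : ℕ) (α : ℝ → ℝ) (c : ℝ) (hc : 0 < c)
    (hd1 : Differentiable ℝ α)
    (hd2 : Differentiable ℝ (deriv α))
    (hmono : MonotoneOn α (Set.Ici 0))
    (hconc : ConcaveOn ℝ (Set.Ici 0) α)
    (h0 : 1 ≤ α 0)
    (htend : Filter.Tendsto α Filter.atTop Filter.atTop)
    (hder : ∀ x : ℝ, 0 ≤ x → deriv α x ≤ α x / (1 + x))
    (hder2 : ∀ x : ℝ, 0 ≤ x → -(c / (1 + x)) ≤ deriv (deriv α) x) :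
    ∀ l : ℕ, 1 ≤ l → ∃ c₃ > (0:ℝ), ∃ c₄ > (0:ℝ),
      ∀ (x y : EuclideanSpace ℝ (Fin d)) (lam : ℝ), 0 ≤ lam →
        theta α l x lam ≤ c₃ * theta α l y lam *
          Real.exp (c₄ * Real.log (1 + ‖x - y‖ ^ 2) * iterLog α l (1 + ‖x - y‖ ^ 2)) := by
  intro l hl
  obtain ⟨k, rfl⟩ : ∃ k, l = k + 1 := ⟨l - 1, by omega⟩
  obtain ⟨hb1, hb2, hb3⟩ := iterLog_pkg α hd1 hmono hconc h0 hder k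
  set g : ℝ → ℝ := iterLog α (k + 1) with hgdef
  have hgapp : ∀ t : ℝ, g t = Real.log (Real.exp 1 + iterLog α k t) := fun _ => rfl
  have hE : ∀ t : ℝ, 0 ≤ t → (0:ℝ) < Real.exp 1 + iterLog α k t := by
    intro t ht
    have := hb1 t ht
    have := Real.exp_pos 1
    linarith
  have hg1 : ∀ t : ℝ, 0 ≤ t → 1 ≤ g t := by
    intro t ht
    rw [hgapp, Real.le_log_iff_exp_le (hE t ht)]
    linarith [hb1 t ht]
  have hg2 : ∀ u v : ℝ, 0 ≤ u → u ≤ v → g u ≤ g v := by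
    intro u v hu huv
    rw [hgapp, hgapp]
    exact Real.log_le_log (hE u hu) (by linarith [hb2 u v hu huv])
  have hg3 : ∀ u v : ℝ, 0 ≤ u → u ≤ v → g v ≤ g u + (v - u) / (1 + u) := by
    intro u v hu huv
    have hv : (0:ℝ) ≤ v := le_trans hu huv
    have h1u : (0:ℝ) < 1 + u := by linarith
    have hEu := hE u hu
    have hEv := hE v hv
    rw [hgapp, hgapp]
    have hlog : Real.log (Real.exp 1 + iterLog α k v) ≤
        Real.log (Real.exp 1 + iterLog α k u) +
          (iterLog α k v - iterLog α k u) / (Real.exp 1 + iterLog α k u) := by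
      have hd := Real.log_le_sub_one_of_pos (div_pos hEv hEu)
      rw [Real.log_div (ne_of_gt hEv) (ne_of_gt hEu)] at hd
      have heq : (Real.exp 1 + iterLog α k v) / (Real.exp 1 + iterLog α k u) - 1 =
          (iterLog α k v - iterLog α k u) / (Real.exp 1 + iterLog α k u) := by
        field_simp; ring
      linarith
    have hnum : (iterLog α k v - iterLog α k u) * (1 + u) ≤
        (v - u) * (Real.exp 1 + iterLog α k u) := by
      have h1 : iterLog α k v - iterLog α k u ≤ iterLog α k u * (v - u) / (1 + u) := by
        linarith [hb3 u v hu huv]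
      have h2 : (iterLog α k v - iterLog α k u) * (1 + u) ≤ iterLog α k u * (v - u) := by
        rw [← le_div_iff₀ h1u]; exact h1
      have h3 : iterLog α k u * (v - u) ≤ (Real.exp 1 + iterLog α k u) * (v - u) := by
        have he := Real.exp_pos 1
        have hvu : (0:ℝ) ≤ v - u := by linarith
        exact mul_le_mul_of_nonneg_right (by linarith) hvu
      linarith
    have hdiv : (iterLog α k v - iterLog α k u) / (Real.exp 1 + iterLog α k u) ≤
        (v - u) / (1 + u) := by
      rw [div_le_div_iff₀ hEu h1u]; exact hnum
    linarith
  have hg4 : ∀ t : ℝ, 0 ≤ t → g t ≤ g 0 + Real.log (1 + t) := by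
    intro t ht
    have hbt : iterLog α k t ≤ iterLog α k 0 * (1 + t) := by
      have h0' := hb3 0 t le_rfl ht
      have h1 : iterLog α k 0 * (t - 0) / (1 + 0) = iterLog α k 0 * t := by ring
      rw [h1] at h0'
      linarith
    have hE0 := hE 0 le_rfl
    have hEt := hE t ht
    have h1t : (0:ℝ) < 1 + t := by linarith
    rw [hgapp, hgapp]
    have hmono' : Real.exp 1 + iterLog α k t ≤
        (Real.exp 1 + iterLog α k 0) * (1 + t) := by
      have he := Real.exp_pos 1
      have het : 0 ≤ Real.exp 1 * t := mul_nonneg (le_of_lt he) ht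
      have hb0 := hb1 0 le_rfl
      have hbt0 : 0 ≤ iterLog α k 0 * t := mul_nonneg (by linarith) ht
      linarith [hbt]
    have h2 : Real.log (Real.exp 1 + iterLog α k t) ≤
        Real.log ((Real.exp 1 + iterLog α k 0) * (1 + t)) :=
      Real.log_le_log hEt hmono'
    rw [Real.log_mul (ne_of_gt hE0) (ne_of_gt h1t)] at h2
    exact h2
  -- constants
  set K : ℝ := g 0 with hKdef
  have hK1 : 1 ≤ K := hg1 0 le_rfl
  set C : ℝ := 8 * K + 16 with hCdef
  have hC0 : 0 < C := by rw [hCdef]; linarith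
  refine ⟨Real.exp (2 * C), Real.exp_pos _, 2 * C, by linarith, ?_⟩
  intro x y lam hlam
  -- geometric quantities
  set X : ℝ := Real.sqrt (1 + ‖x‖ ^ 2) with hXdef
  set Y : ℝ := Real.sqrt (1 + ‖y‖ ^ 2) with hYdef
  set S : ℝ := Real.sqrt (1 + ‖x - y‖ ^ 2) with hSdef
  have hx2 : X ^ 2 = 1 + ‖x‖ ^ 2 := Real.sq_sqrt (by positivity)
  have hy2 : Y ^ 2 = 1 + ‖y‖ ^ 2 := Real.sq_sqrt (by positivity)
  have hs2 : S ^ 2 = 1 + ‖x - y‖ ^ 2 := Real.sq_sqrt (by positivity)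
  have hX1 : 1 ≤ X := by
    rw [hXdef, Real.le_sqrt (by norm_num) (by positivity)]
    nlinarith [sq_nonneg ‖x‖]
  have hY1 : 1 ≤ Y := by
    rw [hYdef, Real.le_sqrt (by norm_num) (by positivity)]
    nlinarith [sq_nonneg ‖y‖]
  have hS1 : 1 ≤ S := by
    rw [hSdef, Real.le_sqrt (by norm_num) (by positivity)]
    nlinarith [sq_nonneg ‖x - y‖]
  have hxX : ‖x‖ ≤ X := by
    have h := Real.sqrt_le_sqrt (show ‖x‖ ^ 2 ≤ 1 + ‖x‖ ^ 2 by linarith)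
    rwa [Real.sqrt_sq (norm_nonneg x)] at h
  have hzS : ‖x - y‖ ≤ S := by
    have h := Real.sqrt_le_sqrt (show ‖x - y‖ ^ 2 ≤ 1 + ‖x - y‖ ^ 2 by linarith)
    rwa [Real.sqrt_sq (norm_nonneg _)] at h
  have hYle : Y ≤ X + S := by
    have hxy : ‖y‖ ≤ ‖x‖ + ‖x - y‖ := by
      calc ‖y‖ = ‖x - (x - y)‖ := by rw [sub_sub_cancel]
        _ ≤ ‖x‖ + ‖x - y‖ := norm_sub_le _ _
    have hsq : ‖y‖ ^ 2 ≤ (‖x‖ + ‖x - y‖) ^ 2 :=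
      pow_le_pow_left₀ (norm_nonneg y) hxy 2
    have hmul : ‖x‖ * ‖x - y‖ ≤ X * S :=
      mul_le_mul hxX hzS (norm_nonneg _) (by linarith)
    have h1 : 1 + ‖y‖ ^ 2 ≤ (X + S) ^ 2 := by
      have hexp : (X + S) ^ 2 = X ^ 2 + 2 * (X * S) + S ^ 2 := by ring
      have hexp2 : (‖x‖ + ‖x - y‖) ^ 2 =
          ‖x‖ ^ 2 + 2 * (‖x‖ * ‖x - y‖) + ‖x - y‖ ^ 2 := by ring
      rw [hexp]
      rw [hexp2] at hsq
      linarith [hx2, hs2, hsq, hmul, sq_nonneg ‖x - y‖]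
    have h2 := Real.sqrt_le_sqrt h1
    rwa [Real.sqrt_sq (by linarith : (0:ℝ) ≤ X + S)] at h2
  -- the core estimate
  have hcore := core_est g hg1 hg2 hg3 hg4 S X Y hS1 hX1 hY1 hYle
  -- notation for the pieces of theta
  have hlamg : 1 ≤ g lam := hg1 lam hlam
  have hsq1 : 1 ≤ Real.sqrt (g lam) := by
    rw [Real.le_sqrt (by norm_num) (by linarith)]
    norm_num
    linarith
  set q : ℝ := lam / Real.sqrt (g lam) with hqdef
  have hq0 : 0 ≤ q := div_nonneg hlam (by linarith)
  have hqlam : q ≤ lam := div_le_self hlam hsq1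
  have hlXn : 0 ≤ Real.log X := Real.log_nonneg hX1
  have hlYn : 0 ≤ Real.log Y := Real.log_nonneg hY1
  have hlSn : 0 ≤ Real.log S := Real.log_nonneg hS1
  have hgXn : 1 ≤ g X := hg1 X (by linarith)
  have hgYn : 1 ≤ g Y := hg1 Y (by linarith)
  have hgS2n : 1 ≤ g (S ^ 2) := hg1 _ (sq_nonneg S)
  set Ax : ℝ := 2 * Real.log X * g X with hAxdef
  set Ay : ℝ := 2 * Real.log Y * g Y with hAydef
  set B : ℝ := 2 * Real.log S * g (S ^ 2) with hBdef
  set M : ℝ := C * (B + 1) with hMdef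
  have hB0 : 0 ≤ B := by
    rw [hBdef]
    exact mul_nonneg (by linarith) (by linarith)
  have hM0 : 0 ≤ M := by
    rw [hMdef]
    exact mul_nonneg (le_of_lt hC0) (by linarith)
  have hAx0 : 0 ≤ Ax := by
    rw [hAxdef]; exact mul_nonneg (by linarith) (by linarith)
  have hAy0 : 0 ≤ Ay := by
    rw [hAydef]; exact mul_nonneg (by linarith) (by linarith)
  have hcoreM : Ay ≤ Ax + M := by
    rw [hAydef, hAxdef, hMdef, hBdef, hCdef, hKdef]
    exact hcore
  set P : ℝ := 1 + lam ^ 2 with hPdef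
  have hPAx : (0:ℝ) ≤ P + Ax := by rw [hPdef]; nlinarith [sq_nonneg lam]
  have hPAy : (0:ℝ) ≤ P + Ay := by rw [hPdef]; nlinarith [sq_nonneg lam]
  have hlamP : lam ≤ Real.sqrt (P + Ax) := by
    have h1 : lam ^ 2 ≤ P + Ax := by rw [hPdef]; linarith
    have h2 := Real.sqrt_le_sqrt h1
    rwa [Real.sqrt_sq hlam] at h2
  -- key estimate on the sqrt term
  have key1 : q * (Real.sqrt (P + Ay) - Real.sqrt (P + Ax)) ≤ M := by
    rcases eq_or_lt_of_le hlam with h0lam | hpos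
    · rw [hqdef, ← h0lam]
      simp [hM0]
    · rcases le_total Ay Ax with hle | hle
      · have hd : Real.sqrt (P + Ay) ≤ Real.sqrt (P + Ax) :=
          Real.sqrt_le_sqrt (by linarith)
        exact le_trans (mul_nonpos_of_nonneg_of_nonpos hq0 (by linarith)) hM0
      · have hm0 : 0 ≤ M / (2 * lam) := div_nonneg hM0 (by linarith)
        have hbsq : (Real.sqrt (P + Ax)) ^ 2 = P + Ax := Real.sq_sqrt hPAx
        have h2bm : 2 * lam * (M / (2 * lam)) ≤
            2 * Real.sqrt (P + Ax) * (M / (2 * lam)) :=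
          mul_le_mul_of_nonneg_right (by linarith) hm0
        have hcanc : 2 * lam * (M / (2 * lam)) = M := by
          field_simp
        have hup : P + Ay ≤ (Real.sqrt (P + Ax) + M / (2 * lam)) ^ 2 := by
          have hexp : (Real.sqrt (P + Ax) + M / (2 * lam)) ^ 2 =
              Real.sqrt (P + Ax) ^ 2 + 2 * Real.sqrt (P + Ax) * (M / (2 * lam)) +
                (M / (2 * lam)) ^ 2 := by ring
          rw [hexp, hbsq]
          linarith [sq_nonneg (M / (2 * lam)), h2bm, hcanc, hcoreM]
        have h1 : Real.sqrt (P + Ay) ≤ Real.sqrt (P + Ax) + M / (2 * lam) := by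
          have h2 := Real.sqrt_le_sqrt hup
          rwa [Real.sqrt_sq (add_nonneg (Real.sqrt_nonneg _) hm0)] at h2
        have h3 : q * (Real.sqrt (P + Ay) - Real.sqrt (P + Ax)) ≤ q * (M / (2 * lam)) :=
          mul_le_mul_of_nonneg_left (by linarith) hq0
        have h4 : q * (M / (2 * lam)) ≤ lam * (M / (2 * lam)) :=
          mul_le_mul_of_nonneg_right hqlam hm0
        have h5 : lam * (M / (2 * lam)) = M / 2 := by
          field_simp
        linarith
  -- unfold theta and conclude
  have hgoal : Real.exp (-q * Real.sqrt (P + Ax) - Ax) ≤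
      Real.exp (2 * C) * Real.exp (-q * Real.sqrt (P + Ay) - Ay) *
        Real.exp (2 * C * Real.log (S ^ 2) * g (S ^ 2)) := by
    rw [← Real.exp_add, ← Real.exp_add]
    apply Real.exp_le_exp.mpr
    have hlogS2 : Real.log (S ^ 2) = 2 * Real.log S := by
      rw [sq, Real.log_mul (by linarith : S ≠ 0) (by linarith : S ≠ 0)]; ring
    rw [hlogS2]
    have hBeq : 2 * C * (2 * Real.log S) * g (S ^ 2) = 2 * C * B := by
      rw [hBdef]; ring
    have hMeq : M = C * B + C := by rw [hMdef]; ring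
    linarith [key1, hcoreM, hBeq, hMeq]
  -- now rewrite the original goal into hgoal's shape
  show Real.exp (-(lam / Real.sqrt (g lam)) *
      Real.sqrt (1 + lam ^ 2 + Real.log (1 + ‖x‖ ^ 2) * g (Real.sqrt (1 + ‖x‖ ^ 2))) -
      Real.log (1 + ‖x‖ ^ 2) * g (Real.sqrt (1 + ‖x‖ ^ 2))) ≤
    Real.exp (2 * C) * Real.exp (-(lam / Real.sqrt (g lam)) *
      Real.sqrt (1 + lam ^ 2 + Real.log (1 + ‖y‖ ^ 2) * g (Real.sqrt (1 + ‖y‖ ^ 2))) -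
      Real.log (1 + ‖y‖ ^ 2) * g (Real.sqrt (1 + ‖y‖ ^ 2))) *
    Real.exp (2 * C * Real.log (1 + ‖x - y‖ ^ 2) * g (1 + ‖x - y‖ ^ 2))
  have hlx : Real.log (1 + ‖x‖ ^ 2) = 2 * Real.log X := by
    rw [← hx2, sq, Real.log_mul (by linarith : X ≠ 0) (by linarith : X ≠ 0)]; ring
  have hly : Real.log (1 + ‖y‖ ^ 2) = 2 * Real.log Y := by
    rw [← hy2, sq, Real.log_mul (by linarith : Y ≠ 0) (by linarith : Y ≠ 0)]; ring
  have hlogS2 : Real.log (S ^ 2) = 2 * Real.log S := by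
    rw [sq, Real.log_mul (by linarith : S ≠ 0) (by linarith : S ≠ 0)]; ring
  have hls : Real.log (1 + ‖x - y‖ ^ 2) = Real.log (S ^ 2) := by rw [hs2]
  rw [hlx, hly, hls, ← hs2, ← hXdef, ← hYdef]
  rw [show 2 * Real.log X * g X = Ax from rfl, show 2 * Real.log Y * g Y = Ay from rfl]
  rw [show lam / Real.sqrt (g lam) = q from rfl]
  rw [show 1 + lam ^ 2 + Ax = P + Ax by rw [hPdef], show 1 + lam ^ 2 + Ay = P + Ay by rw [hPdef]]
  exact hgoal
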